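/- Let $p$ be an odd prime with $2$ a quadratic non-residue mod $p$, and let $(x,y,z,t)\in\mathbb{Z}_p^4$ be a solution of $-9x^2+2xy+7y^2+2z^2=(2t^2-1)^2$ with $(2t^2-1)^2 \neq 2z^2$. Then both $y-x$ and $9x+7y$ are units in $\mathbb{Z}_p$, and the Hilbert symbol $(y-x, 2)_p = 1$. -/

import Mathlib

open Polynomial

lemma isUnit_iff_toZMod_ne_zero (p : ℕ) [Fact p.Prime] (w : ℤ_[p]) :
    IsUnit w ↔ PadicInt.toZMod w ≠ 0 := by
  constructor
  · intro hu h0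
    have : w ∈ IsLocalRing.maximalIdeal ℤ_[p] := by
      rw [← PadicInt.ker_toZMod]; exact h0
    exact (IsLocalRing.mem_maximalIdeal w).mp this hu
  · intro h
    by_contra hu
    have : w ∈ IsLocalRing.maximalIdeal ℤ_[p] := (IsLocalRing.mem_maximalIdeal w).mpr hu
    rw [← PadicInt.ker_toZMod] at this
    exact h this

lemma two_ne_zero_zmod (p : ℕ) [hp : Fact p.Prime] (hodd : p ≠ 2) : (2 : ZMod p) ≠ 0 := by
  have : ((2 : ℕ) : ZMod p) ≠ 0 := by
    rw [Ne, ZMod.natCast_eq_zero_iff]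
    intro hdvd
    exact hodd ((Nat.prime_dvd_prime_iff_eq hp.out Nat.prime_two).mp hdvd)
  simpa using this

lemma toZMod_two (p : ℕ) [Fact p.Prime] : PadicInt.toZMod (2 : ℤ_[p]) = 2 := by
  have : (2 : ℤ_[p]) = ((2 : ℕ) : ℤ_[p]) := by norm_num
  rw [this, map_natCast]
  norm_num

lemma isUnit_two (p : ℕ) [Fact p.Prime] (hodd : p ≠ 2) : IsUnit (2 : ℤ_[p]) := by
  rw [isUnit_iff_toZMod_ne_zero, toZMod_two]
  exact two_ne_zero_zmod p hodd

lemma norm_eq_one_of_isUnit {p : ℕ} [Fact p.Prime] {w : ℤ_[p]} (h : IsUnit w) : ‖w‖ = 1 :=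
  PadicInt.isUnit_iff.mp h

/-- Every unit of `ℤ_[p]` is of the form `a² - 2b²` (p odd). -/
lemma unit_is_norm (p : ℕ) [hp : Fact p.Prime] (hodd : p ≠ 2) (w : ℤ_[p])
    (hw : IsUnit w) : ∃ a b : ℤ_[p], w = a ^ 2 - 2 * b ^ 2 := by
  have h2 : (2 : ZMod p) ≠ 0 := two_ne_zero_zmod p hodd
  have h2u : IsUnit (2 : ℤ_[p]) := isUnit_two p hodd
  set wbar : ZMod p := PadicInt.toZMod w with hwbar
  -- Step A: solve mod p
  have hcard : Fintype.card (ZMod p) % 2 = 1 := by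
    rw [ZMod.card]
    exact Nat.odd_iff.mp (hp.out.odd_of_ne_two hodd)
  have hneg2 : (-2 : ZMod p) ≠ 0 := by
    intro h0
    exact h2 (by linear_combination -h0)
  obtain ⟨abar, bbar, hab⟩ :
      ∃ a b : ZMod p, (X ^ 2 : (ZMod p)[X]).eval a +
        (C (-2) * X ^ 2 + C (-wbar)).eval b = 0 := by
    apply FiniteField.exists_root_sum_quadratic (degree_X_pow 2) _ hcard
    rw [degree_add_eq_left_of_degree_lt]
    · rw [degree_C_mul hneg2, degree_X_pow]; rfl
    · rw [degree_C_mul hneg2, degree_X_pow]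
      exact lt_of_le_of_lt (degree_C_le) (by decide)
  simp only [eval_add, eval_mul, eval_pow, eval_X, eval_C] at hab
  have key : abar ^ 2 - 2 * bbar ^ 2 = wbar := by linear_combination hab
  have hwne : wbar ≠ 0 := (isUnit_iff_toZMod_ne_zero p w).mp hw
  -- lifts
  set A : ℤ_[p] := (abar.val : ℤ_[p]) with hA
  set B : ℤ_[p] := (bbar.val : ℤ_[p]) with hB
  have hAbar : PadicInt.toZMod A = abar := by
    rw [hA, map_natCast, ZMod.natCast_zmod_val]
  have hBbar : PadicInt.toZMod B = bbar := by
    rw [hB, map_natCast, ZMod.natCast_zmod_val]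
  have dvd_of_zero : ∀ v : ℤ_[p], PadicInt.toZMod v = 0 → ‖v‖ < 1 := by
    intro v hv
    rw [PadicInt.norm_lt_one_iff_dvd, ← Ideal.mem_span_singleton,
      ← PadicInt.maximalIdeal_eq_span_p, ← PadicInt.ker_toZMod]
    exact hv
  rcases eq_or_ne abar 0 with hA0 | hAne
  · -- abar = 0, so bbar ≠ 0 : solve 2 z² = A² - w by Hensel in b-variable
    have hBne : bbar ≠ 0 := by
      intro hb0
      rw [hA0, hb0] at key
      simp at key
      exact hwne key.symm
    have hBu : IsUnit B := by rw [isUnit_iff_toZMod_ne_zero, hBbar]; exact hBne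
    set cc : ℤ_[p] := A ^ 2 - w with hcc
    set F : (ℤ_[p])[X] := C 2 * X ^ 2 - C cc with hF
    have hFeval : F.eval B = 2 * B ^ 2 - cc := by simp [hF]
    have hFder : F.derivative.eval B = 4 * B := by
      simp [hF]; ring
    have hnorm : ‖F.eval B‖ < ‖F.derivative.eval B‖ ^ 2 := by
      have h1 : ‖F.derivative.eval B‖ = 1 := by
        rw [hFder]
        exact norm_eq_one_of_isUnit (by
          have : (4 : ℤ_[p]) = 2 * 2 := by norm_num
          exact (this ▸ (h2u.mul h2u)).mul hBu)
      rw [h1, one_pow, hFeval, hcc]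
      apply dvd_of_zero
      simp only [map_sub, map_mul, map_pow, map_ofNat, hAbar, hBbar, toZMod_two]
      linear_combination -key
    obtain ⟨zz, hz, -⟩ := hensels_lemma hnorm
    rw [hF, Polynomial.coe_aeval_eq_eval] at hz
    simp only [eval_sub, eval_mul, eval_pow, eval_X, eval_C, hcc] at hz
    exact ⟨A, zz, by linear_combination hz⟩
  · -- abar ≠ 0 : solve z² = w + 2B² by Hensel in a-variable
    have hAu : IsUnit A := by rw [isUnit_iff_toZMod_ne_zero, hAbar]; exact hAne
    set cc : ℤ_[p] := w + 2 * B ^ 2 with hcc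
    set F : (ℤ_[p])[X] := X ^ 2 - C cc with hF
    have hFeval : F.eval A = A ^ 2 - cc := by simp [hF]
    have hFder : F.derivative.eval A = 2 * A := by simp [hF, one_add_one_eq_two]
    have hnorm : ‖F.eval A‖ < ‖F.derivative.eval A‖ ^ 2 := by
      have h1 : ‖F.derivative.eval A‖ = 1 := by
        rw [hFder]; exact norm_eq_one_of_isUnit (h2u.mul hAu)
      rw [h1, one_pow, hFeval, hcc]
      apply dvd_of_zero
      simp only [map_sub, map_add, map_mul, map_pow, map_ofNat, hAbar, hBbar, toZMod_two]
      linear_combination key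
    obtain ⟨zz, hz, -⟩ := hensels_lemma hnorm
    rw [hF, Polynomial.coe_aeval_eq_eval] at hz
    simp only [eval_sub, eval_pow, eval_X, eval_C, hcc] at hz
    exact ⟨zz, B, by linear_combination -hz⟩

theorem stmt16 (p : ℕ) [Fact p.Prime] (hodd : p ≠ 2)
    (hns : ¬ ∃ u : ZMod p, u ^ 2 = 2)
    (x y z t : ℤ_[p])
    (h : -9 * x ^ 2 + 2 * x * y + 7 * y ^ 2 + 2 * z ^ 2 = (2 * t ^ 2 - 1) ^ 2)
    (hnz : (2 * t ^ 2 - 1) ^ 2 ≠ 2 * z ^ 2) :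
    IsUnit (y - x) ∧ IsUnit (9 * x + 7 * y) ∧
    ∃ a b : ℚ_[p], ((y - x : ℤ_[p]) : ℚ_[p]) = a ^ 2 - 2 * b ^ 2 := by
  have hU : (y - x) * (9 * x + 7 * y) = (2 * t ^ 2 - 1) ^ 2 - 2 * z ^ 2 := by
    linear_combination h
  have hUunit : IsUnit ((2 * t ^ 2 - 1) ^ 2 - 2 * z ^ 2 : ℤ_[p]) := by
    rw [isUnit_iff_toZMod_ne_zero]
    intro h0
    set T := PadicInt.toZMod t with hT
    set Z := PadicInt.toZMod z with hZ
    have heq : (2 * T ^ 2 - 1) ^ 2 - 2 * Z ^ 2 = 0 := by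
      have := h0
      simp only [map_sub, map_mul, map_pow, map_one, map_ofNat, toZMod_two] at this
      exact this
    rcases eq_or_ne Z 0 with hZ0 | hZne
    · rw [hZ0] at heq
      have h1 : (2 * T ^ 2 - 1) ^ 2 = 0 := by linear_combination heq
      have h2 : 2 * T ^ 2 - 1 = 0 := by
        exact pow_eq_zero_iff (n := 2) (by norm_num) |>.mp h1
      have hTne : T ≠ 0 := by
        intro hT0
        rw [hT0] at h2
        simp at h2
      exact hns ⟨T⁻¹, by field_simp; linear_combination -h2⟩
    · exact hns ⟨(2 * T ^ 2 - 1) * Z⁻¹, by field_simp; linear_combination heq⟩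
  rw [← hU] at hUunit
  have hyx : IsUnit (y - x) := isUnit_of_mul_isUnit_left hUunit
  refine ⟨hyx, isUnit_of_mul_isUnit_right hUunit, ?_⟩
  obtain ⟨a, b, hab⟩ := unit_is_norm p hodd (y - x) hyx
  have h2c : ((2 : ℤ_[p]) : ℚ_[p]) = 2 := by
    rw [show (2 : ℤ_[p]) = ((2 : ℕ) : ℤ_[p]) by norm_num, PadicInt.coe_natCast]
    norm_num
  exact ⟨(a : ℚ_[p]), (b : ℚ_[p]), by rw [hab]; push_cast [h2c]; ring⟩
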